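/- Let J be an invertible Hermitian N×N complex matrix whose number of negative eigenvalues (counted with multiplicity) is κ, and let A be a J-selfadjoint N×N matrix (J·A = Aᴴ·J) whose spectrum consists of real eigenvalues all lying in the open interval (a, b), where a < b are real. Then the Hermitian matrix H := (A - b)ᴴ J (A - a) has exactly κ positive eigenvalues and N - κ negative eigenvalues (counted with multiplicity). -/

import Mathlib

open Matrix

namespace Stmt6Aux

variable {N : ℕ}

noncomputable def Q (M : Matrix (Fin N) (Fin N) ℂ) (x : Fin N → ℂ) : ℝ :=
  (star x ⬝ᵥ M *ᵥ x).re

def posOn (M : Matrix (Fin N) (Fin N) ℂ) (W : Submodule ℂ (Fin N → ℂ)) : Prop :=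
  ∀ x ∈ W, x ≠ 0 → 0 < Q M x

def negOn (M : Matrix (Fin N) (Fin N) ℂ) (W : Submodule ℂ (Fin N → ℂ)) : Prop :=
  ∀ x ∈ W, x ≠ 0 → Q M x < 0

def nonposOn (M : Matrix (Fin N) (Fin N) ℂ) (W : Submodule ℂ (Fin N → ℂ)) : Prop :=
  ∀ x ∈ W, Q M x ≤ 0

def nonnegOn (M : Matrix (Fin N) (Fin N) ℂ) (W : Submodule ℂ (Fin N → ℂ)) : Prop :=
  ∀ x ∈ W, 0 ≤ Q M x

noncomputable def posDim (M : Matrix (Fin N) (Fin N) ℂ) : ℕ :=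
  sSup {n | ∃ W : Submodule ℂ (Fin N → ℂ), Module.finrank ℂ W = n ∧ posOn M W}

noncomputable def negDim (M : Matrix (Fin N) (Fin N) ℂ) : ℕ :=
  sSup {n | ∃ W : Submodule ℂ (Fin N → ℂ), Module.finrank ℂ W = n ∧ negOn M W}

lemma Q_neg (M : Matrix (Fin N) (Fin N) ℂ) (x : Fin N → ℂ) : Q (-M) x = - Q M x := by
  simp [Q, Matrix.neg_mulVec]

lemma Q_sub (M M' : Matrix (Fin N) (Fin N) ℂ) (x : Fin N → ℂ) :
    Q M x - Q M' x = Q (M - M') x := by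
  simp [Q, Matrix.sub_mulVec, dotProduct_sub]

lemma Q_smul (M : Matrix (Fin N) (Fin N) ℂ) (r : ℝ) (x : Fin N → ℂ) :
    Q M ((r : ℂ) • x) = r ^ 2 * Q M x := by
  simp only [Q, star_smul, Matrix.mulVec_smul, dotProduct_smul, smul_dotProduct]
  rw [Complex.star_def, Complex.conj_ofReal]
  simp only [smul_eq_mul]
  rw [show ((r:ℂ) * ((r:ℂ) * (star x ⬝ᵥ M *ᵥ x))) = ((r*r : ℝ) : ℂ) * (star x ⬝ᵥ M *ᵥ x) by
    push_cast; ring]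
  rw [Complex.re_ofReal_mul]; ring

lemma Q_real_smul (M : Matrix (Fin N) (Fin N) ℂ) (r : ℝ) (x : Fin N → ℂ) :
    Q ((r : ℂ) • M) x = r * Q M x := by
  simp only [Q, Matrix.smul_mulVec, dotProduct_smul, smul_eq_mul,
    Complex.re_ofReal_mul]

lemma Q_bound (M : Matrix (Fin N) (Fin N) ℂ) {x : Fin N → ℂ} (hx : ∀ i, ‖x i‖ ≤ 1) :
    |Q M x| ≤ ∑ i, ∑ j, ‖M i j‖ := by
  have h1 : |Q M x| ≤ ‖star x ⬝ᵥ M *ᵥ x‖ := Complex.abs_re_le_norm _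
  refine h1.trans ?_
  have : star x ⬝ᵥ M *ᵥ x = ∑ i, ∑ j, star (x i) * (M i j * x j) := by
    simp [dotProduct, Matrix.mulVec, Finset.mul_sum]
  rw [this]
  refine (norm_sum_le _ _).trans ?_
  refine Finset.sum_le_sum fun i _ => ?_
  refine (norm_sum_le _ _).trans ?_
  refine Finset.sum_le_sum fun j _ => ?_
  rw [norm_mul, norm_mul]
  have h2 : ‖star (x i)‖ ≤ 1 := by simpa using hx i
  have h3 : ‖x j‖ ≤ 1 := hx j
  have hm := norm_nonneg (M i j)
  calc ‖star (x i)‖ * (‖M i j‖ * ‖x j‖)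
      ≤ 1 * (‖M i j‖ * 1) := by
        apply mul_le_mul h2 _ (by positivity) zero_le_one
        exact mul_le_mul_of_nonneg_left h3 hm
    _ = ‖M i j‖ := by ring

lemma posOn_neg {M : Matrix (Fin N) (Fin N) ℂ} {W : Submodule ℂ (Fin N → ℂ)} :
    posOn (-M) W ↔ negOn M W := by
  constructor <;> intro h x hx hx0 <;> have := h x hx hx0 <;>
    simp only [Q_neg] at * <;> linarith

lemma nonposOn_neg {M : Matrix (Fin N) (Fin N) ℂ} {W : Submodule ℂ (Fin N → ℂ)} :
    nonposOn (-M) W ↔ nonnegOn M W := by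
  constructor <;> intro h x hx <;> have := h x hx <;> simp only [Q_neg] at * <;> linarith

lemma dim_add_dim_le (M : Matrix (Fin N) (Fin N) ℂ) {W V : Submodule ℂ (Fin N → ℂ)}
    (hW : posOn M W) (hV : nonposOn M V) :
    Module.finrank ℂ W + Module.finrank ℂ V ≤ N := by
  by_contra h
  push_neg at h
  have hsum := Submodule.finrank_sup_add_finrank_inf_eq W V
  have hle : Module.finrank ℂ ↥(W ⊔ V) ≤ N := by
    have h2 := Submodule.finrank_le (W ⊔ V)
    simpa [Module.finrank_fin_fun] using h2
  have hpos : 0 < Module.finrank ℂ ↥(W ⊓ V) := by omega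
  obtain ⟨x, hx0⟩ := Module.finrank_pos_iff_exists_ne_zero.mp hpos
  have hxW : (x : Fin N → ℂ) ∈ W := x.2.1
  have hxV : (x : Fin N → ℂ) ∈ V := x.2.2
  have hxne : (x : Fin N → ℂ) ≠ 0 := by
    simpa [Submodule.coe_eq_zero] using hx0
  exact absurd (hV _ hxV) (not_le.mpr (hW _ hxW hxne))

lemma dim_add_dim_le' (M : Matrix (Fin N) (Fin N) ℂ) {W V : Submodule ℂ (Fin N → ℂ)}
    (hW : negOn M W) (hV : nonnegOn M V) :
    Module.finrank ℂ W + Module.finrank ℂ V ≤ N :=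
  dim_add_dim_le (-M) (posOn_neg.mpr hW) (nonposOn_neg.mpr hV)

lemma exists_eigenspace {M : Matrix (Fin N) (Fin N) ℂ} (hM : M.IsHermitian) (S : Finset (Fin N)) :
    ∃ W : Submodule ℂ (Fin N → ℂ), Module.finrank ℂ W = S.card ∧
      ∀ x ∈ W, ∃ c : Fin N → ℝ, (∀ i, 0 ≤ c i) ∧ (∀ i ∉ S, c i = 0) ∧
        (x ≠ 0 → ∃ i ∈ S, 0 < c i) ∧ Q M x = ∑ i, hM.eigenvalues i * c i := by
  set U : Matrix (Fin N) (Fin N) ℂ := (hM.eigenvectorUnitary : Matrix (Fin N) (Fin N) ℂ) with hUdef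
  have hUU : star U * U = 1 := Unitary.coe_star_mul_self hM.eigenvectorUnitary
  have hUinj : Function.Injective U.mulVec := by
    intro c₁ c₂ h
    have h2 := congrArg (star U).mulVec h
    simpa [Matrix.mulVec_mulVec, hUU, Matrix.one_mulVec] using h2
  set v : Fin N → (Fin N → ℂ) := fun i => U *ᵥ Pi.single i 1 with hvdef
  have hli : LinearIndependent ℂ v := by
    have h1 := (Pi.basisFun ℂ (Fin N)).linearIndependent
    have h2 := h1.map' U.mulVecLin (LinearMap.ker_eq_bot.mpr hUinj)
    have hv : v = ⇑U.mulVecLin ∘ ⇑(Pi.basisFun ℂ (Fin N)) := by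
      funext i
      simp [v, Matrix.mulVecLin_apply]
    rw [hv]; exact h2
  have hlis : LinearIndependent ℂ (fun i : {i // i ∈ S} => v i) :=
    hli.comp Subtype.val Subtype.val_injective
  refine ⟨Submodule.span ℂ (Set.range fun i : {i // i ∈ S} => v i), ?_, ?_⟩
  · rw [finrank_span_eq_card hlis, Fintype.card_coe]
  intro x hx
  rw [Submodule.mem_span_range_iff_exists_fun] at hx
  obtain ⟨a, ha⟩ := hx
  classical
  set cc : Fin N → ℂ := fun j => if h : j ∈ S then a ⟨j, h⟩ else 0 with hccdef
  have hcc : cc = ∑ i : {i // i ∈ S}, a i • (Pi.single (i : Fin N) (1 : ℂ) : Fin N → ℂ) := by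
    funext j
    rw [Finset.sum_apply]
    by_cases h : j ∈ S
    · rw [Finset.sum_eq_single (⟨j, h⟩ : {i // i ∈ S})]
      · simp [cc, h, Pi.single_apply]
      · intro i _ hne
        have hij : j ≠ (i : Fin N) := by
          intro e; exact hne (by ext; simp [e.symm])
        simp [Pi.single_apply, hij]
      · simp
    · rw [Finset.sum_eq_zero]
      · simp [cc, h]
      · intro i _
        have hij : j ≠ (i : Fin N) := fun e => h (e ▸ i.2)
        simp [Pi.single_apply, hij]
  have hxc : x = U *ᵥ cc := by
    rw [hcc]
    have : U *ᵥ (∑ i : {i // i ∈ S}, a i • (Pi.single (i : Fin N) (1 : ℂ) : Fin N → ℂ))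
        = ∑ i : {i // i ∈ S}, a i • (U *ᵥ Pi.single (i : Fin N) (1 : ℂ)) := by
      rw [← Matrix.mulVecLin_apply, map_sum]
      simp [Matrix.mulVecLin_apply]
    rw [this, ← ha]
  have hQ : Q M x = ∑ i, hM.eigenvalues i * Complex.normSq (cc i) := by
    have hMU : M * U = U * Matrix.diagonal (Complex.ofReal ∘ hM.eigenvalues) := by
      conv_lhs => rw [hM.spectral_theorem, Unitary.conjStarAlgAut_apply]
      rw [Matrix.mul_assoc, Matrix.mul_assoc]
      rw [show (star U : Matrix (Fin N) (Fin N) ℂ) * U = 1 from hUU]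
      rw [Matrix.mul_one]
      rfl
    have h1 : star x ⬝ᵥ M *ᵥ x
        = star cc ⬝ᵥ (Matrix.diagonal (Complex.ofReal ∘ hM.eigenvalues)) *ᵥ cc := by
      rw [hxc, Matrix.star_mulVec, Matrix.mulVec_mulVec, Matrix.dotProduct_mulVec,
        Matrix.vecMul_vecMul, ← Matrix.mul_assoc, ← Matrix.star_eq_conjTranspose,
        Matrix.mul_assoc, hMU, ← Matrix.mul_assoc, hUU, Matrix.one_mul,
        ← Matrix.dotProduct_mulVec]
    rw [Q, h1, dotProduct]
    rw [Complex.re_sum]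
    congr 1
    funext i
    rw [Matrix.mulVec_diagonal]
    have : star (cc i) * ((Complex.ofReal ∘ hM.eigenvalues) i * cc i)
        = ((hM.eigenvalues i * Complex.normSq (cc i) : ℝ) : ℂ) := by
      simp only [Function.comp_apply, Complex.star_def]
      rw [show (starRingEnd ℂ) (cc i) * ((hM.eigenvalues i : ℂ) * cc i)
          = (hM.eigenvalues i : ℂ) * (cc i * (starRingEnd ℂ) (cc i)) by ring]
      rw [Complex.mul_conj]
      push_cast
      ring
    simp only [Pi.star_apply]
    rw [this, Complex.ofReal_re]
  refine ⟨fun i => Complex.normSq (cc i), fun i => Complex.normSq_nonneg _, ?_, ?_, hQ⟩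
  · intro i hi
    simp [cc, hi]
  · intro hx0
    by_contra hcon
    push_neg at hcon
    have hcc0 : cc = 0 := by
      funext i
      by_cases h : i ∈ S
      · have := hcon i h
        have h2 : Complex.normSq (cc i) = 0 := le_antisymm this (Complex.normSq_nonneg _)
        simpa [Complex.normSq_eq_zero] using h2
      · simp [cc, h]
    exact hx0 (by rw [hxc, hcc0, Matrix.mulVec_zero])

lemma finrank_le_N (W : Submodule ℂ (Fin N → ℂ)) : Module.finrank ℂ W ≤ N := by
  have h := Submodule.finrank_le W
  simpa [Module.finrank_fin_fun] using h

lemma posDim_set_nonempty (M : Matrix (Fin N) (Fin N) ℂ) :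
    (0 : ℕ) ∈ {n | ∃ W : Submodule ℂ (Fin N → ℂ), Module.finrank ℂ W = n ∧ posOn M W} := by
  refine ⟨⊥, finrank_bot ℂ _, fun x hx hx0 => absurd (by simpa using hx) hx0⟩

lemma negDim_set_nonempty (M : Matrix (Fin N) (Fin N) ℂ) :
    (0 : ℕ) ∈ {n | ∃ W : Submodule ℂ (Fin N → ℂ), Module.finrank ℂ W = n ∧ negOn M W} := by
  refine ⟨⊥, finrank_bot ℂ _, fun x hx hx0 => absurd (by simpa using hx) hx0⟩

lemma bddAbove_posDim (M : Matrix (Fin N) (Fin N) ℂ) :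
    BddAbove {n | ∃ W : Submodule ℂ (Fin N → ℂ), Module.finrank ℂ W = n ∧ posOn M W} :=
  ⟨N, by rintro n ⟨W, rfl, -⟩; exact finrank_le_N W⟩

lemma bddAbove_negDim (M : Matrix (Fin N) (Fin N) ℂ) :
    BddAbove {n | ∃ W : Submodule ℂ (Fin N → ℂ), Module.finrank ℂ W = n ∧ negOn M W} :=
  ⟨N, by rintro n ⟨W, rfl, -⟩; exact finrank_le_N W⟩

lemma le_posDim {M : Matrix (Fin N) (Fin N) ℂ} {W : Submodule ℂ (Fin N → ℂ)}
    (h : posOn M W) : Module.finrank ℂ W ≤ posDim M :=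
  le_csSup (bddAbove_posDim M) ⟨W, rfl, h⟩

lemma le_negDim {M : Matrix (Fin N) (Fin N) ℂ} {W : Submodule ℂ (Fin N → ℂ)}
    (h : negOn M W) : Module.finrank ℂ W ≤ negDim M :=
  le_csSup (bddAbove_negDim M) ⟨W, rfl, h⟩

open Finset in
lemma posDim_eq {M : Matrix (Fin N) (Fin N) ℂ} (hM : M.IsHermitian) :
    posDim M = (Finset.univ.filter fun i => 0 < hM.eigenvalues i).card := by
  classical
  apply le_antisymm
  · apply csSup_le ⟨0, posDim_set_nonempty M⟩
    rintro n ⟨W, rfl, hW⟩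
    obtain ⟨V, hVrank, hVprop⟩ :=
      exists_eigenspace hM (Finset.univ.filter fun i => ¬ 0 < hM.eigenvalues i)
    have hVnp : nonposOn M V := by
      intro x hx
      obtain ⟨c, hc0, hcS, -, hQ⟩ := hVprop x hx
      rw [hQ]
      apply Finset.sum_nonpos
      intro i _
      by_cases h : i ∈ Finset.univ.filter fun i => ¬ 0 < hM.eigenvalues i
      · have h2 : hM.eigenvalues i ≤ 0 := not_lt.mp (Finset.mem_filter.mp h).2
        have := hc0 i
        nlinarith
      · rw [hcS i h, mul_zero]
    have h1 := dim_add_dim_le M hW hVnp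
    have h2 := Finset.card_filter_add_card_filter_not
      (s := (Finset.univ : Finset (Fin N))) (p := fun i => 0 < hM.eigenvalues i)
    simp only [Finset.card_univ, Fintype.card_fin] at h2
    omega
  · obtain ⟨W, hWrank, hWprop⟩ :=
      exists_eigenspace hM (Finset.univ.filter fun i => 0 < hM.eigenvalues i)
    have hWpos : posOn M W := by
      intro x hx hx0
      obtain ⟨c, hc0, hcS, hex, hQ⟩ := hWprop x hx
      obtain ⟨i0, hi0S, hi0⟩ := hex hx0
      rw [hQ]
      apply Finset.sum_pos'
      · intro i _
        by_cases h : i ∈ Finset.univ.filter fun i => 0 < hM.eigenvalues i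
        · have h2 : 0 < hM.eigenvalues i := (Finset.mem_filter.mp h).2
          have := hc0 i
          positivity
        · rw [hcS i h, mul_zero]
      · refine ⟨i0, Finset.mem_univ _, ?_⟩
        have h2 : 0 < hM.eigenvalues i0 := (Finset.mem_filter.mp hi0S).2
        positivity
    calc (Finset.univ.filter fun i => 0 < hM.eigenvalues i).card
        = Module.finrank ℂ W := hWrank.symm
      _ ≤ posDim M := le_posDim hWpos

open Finset in
lemma negDim_eq {M : Matrix (Fin N) (Fin N) ℂ} (hM : M.IsHermitian) :
    negDim M = (Finset.univ.filter fun i => hM.eigenvalues i < 0).card := by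
  classical
  apply le_antisymm
  · apply csSup_le ⟨0, negDim_set_nonempty M⟩
    rintro n ⟨W, rfl, hW⟩
    obtain ⟨V, hVrank, hVprop⟩ :=
      exists_eigenspace hM (Finset.univ.filter fun i => ¬ hM.eigenvalues i < 0)
    have hVnn : nonnegOn M V := by
      intro x hx
      obtain ⟨c, hc0, hcS, -, hQ⟩ := hVprop x hx
      rw [hQ]
      apply Finset.sum_nonneg
      intro i _
      by_cases h : i ∈ Finset.univ.filter fun i => ¬ hM.eigenvalues i < 0
      · have h2 : 0 ≤ hM.eigenvalues i := not_lt.mp (Finset.mem_filter.mp h).2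
        have := hc0 i
        positivity
      · rw [hcS i h, mul_zero]
    have h1 := dim_add_dim_le' M hW hVnn
    have h2 := Finset.card_filter_add_card_filter_not
      (s := (Finset.univ : Finset (Fin N))) (p := fun i => hM.eigenvalues i < 0)
    simp only [Finset.card_univ, Fintype.card_fin] at h2
    omega
  · obtain ⟨W, hWrank, hWprop⟩ :=
      exists_eigenspace hM (Finset.univ.filter fun i => hM.eigenvalues i < 0)
    have hWneg : negOn M W := by
      intro x hx hx0
      obtain ⟨c, hc0, hcS, hex, hQ⟩ := hWprop x hx
      obtain ⟨i0, hi0S, hi0⟩ := hex hx0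
      rw [hQ]
      have hpos : 0 < ∑ i, -(hM.eigenvalues i * c i) := by
        apply Finset.sum_pos'
        · intro i _
          by_cases h : i ∈ Finset.univ.filter fun i => hM.eigenvalues i < 0
          · have h2 : hM.eigenvalues i < 0 := (Finset.mem_filter.mp h).2
            have := hc0 i
            nlinarith
          · rw [hcS i h, mul_zero, neg_zero]
        · refine ⟨i0, Finset.mem_univ _, ?_⟩
          have h2 : hM.eigenvalues i0 < 0 := (Finset.mem_filter.mp hi0S).2
          nlinarith
      rw [Finset.sum_neg_distrib] at hpos
      linarith
    calc (Finset.univ.filter fun i => hM.eigenvalues i < 0).card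
        = Module.finrank ℂ W := hWrank.symm
      _ ≤ negDim M := le_negDim hWneg

lemma eigenvalues_ne_zero {M : Matrix (Fin N) (Fin N) ℂ} (hM : M.IsHermitian)
    (hdet : IsUnit M.det) (i : Fin N) : hM.eigenvalues i ≠ 0 := by
  intro h
  have hd : M.det = ∏ j, (hM.eigenvalues j : ℂ) := hM.det_eq_prod_eigenvalues
  have h0 : M.det = 0 := by
    rw [hd]
    apply Finset.prod_eq_zero (Finset.mem_univ i)
    rw [h]; simp
  rw [h0] at hdet
  simpa using hdet

lemma posDim_add_negDim {M : Matrix (Fin N) (Fin N) ℂ} (hM : M.IsHermitian)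
    (hdet : IsUnit M.det) : posDim M + negDim M = N := by
  classical
  rw [posDim_eq hM, negDim_eq hM]
  have hfe : (Finset.univ.filter fun i => hM.eigenvalues i < 0)
      = Finset.univ.filter fun i => ¬ 0 < hM.eigenvalues i := by
    apply Finset.filter_congr
    intro i _
    constructor
    · exact fun h => not_lt.mpr h.le
    · intro h
      exact lt_of_le_of_ne (not_lt.mp h) (eigenvalues_ne_zero hM hdet i)
  rw [hfe]
  have h2 := Finset.card_filter_add_card_filter_not
    (s := (Finset.univ : Finset (Fin N))) (p := fun i => 0 < hM.eigenvalues i)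
  simpa [Finset.card_univ] using h2

lemma negOn_neg {M : Matrix (Fin N) (Fin N) ℂ} {W : Submodule ℂ (Fin N → ℂ)} :
    negOn (-M) W ↔ posOn M W := by
  constructor <;> intro h x hx hx0 <;> have := h x hx hx0 <;>
    simp only [Q_neg] at * <;> linarith

lemma continuous_Q_x (M : Matrix (Fin N) (Fin N) ℂ) : Continuous fun x : Fin N → ℂ => Q M x := by
  apply Complex.continuous_re.comp
  exact continuous_star.dotProduct ((continuous_const (y := M)).matrix_mulVec continuous_id)

lemma eventually_negOn {F : ℝ → Matrix (Fin N) (Fin N) ℂ} (hF : Continuous F) (t₀ : ℝ)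
    {W : Submodule ℂ (Fin N → ℂ)} (hW : negOn (F t₀) W) :
    ∀ᶠ t in nhds t₀, negOn (F t) W := by
  classical
  by_cases hbot : W = ⊥
  · subst hbot
    filter_upwards with t x hx hx0
    exact absurd (by simpa using hx) hx0
  obtain ⟨x₀, hx₀W, hx₀⟩ := Submodule.ne_bot_iff W |>.mp hbot
  set Sp : Set (Fin N → ℂ) := (W : Set (Fin N → ℂ)) ∩ {x | ‖x‖ = 1} with hSpdef
  have hclosed : IsClosed Sp := by
    exact (Submodule.closed_of_finiteDimensional W).inter
      (isClosed_eq continuous_norm continuous_const)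
  have hcomp : IsCompact Sp := by
    apply Metric.isCompact_of_isClosed_isBounded hclosed
    apply Bornology.IsBounded.subset (Metric.isBounded_closedBall (x := (0 : Fin N → ℂ)) (r := 1))
    intro x hx
    simp only [Metric.mem_closedBall, dist_zero_right]
    exact le_of_eq hx.2
  have hne : Sp.Nonempty := by
    refine ⟨((‖x₀‖⁻¹ : ℝ) : ℂ) • x₀, Submodule.smul_mem W _ hx₀W, ?_⟩
    have h0 : ‖x₀‖ ≠ 0 := norm_ne_zero_iff.mpr hx₀
    simp only [Set.mem_setOf_eq, norm_smul, Complex.norm_real, norm_inv, norm_norm]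
    field_simp
  obtain ⟨z, hzSp, hzmax⟩ := hcomp.exists_isMaxOn hne (continuous_Q_x (F t₀)).continuousOn
  have hz1 : ‖z‖ = 1 := hzSp.2
  have hzne : z ≠ 0 := fun h => by simp [h] at hz1
  set m : ℝ := Q (F t₀) z with hmdef
  have hm : m < 0 := hW z hzSp.1 hzne
  set e : ℝ → ℝ := fun t => ∑ i, ∑ j, ‖(F t - F t₀) i j‖ with hedef
  have he : Continuous e := by
    apply continuous_finset_sum
    intro i _
    apply continuous_finset_sum
    intro j _
    exact continuous_norm.comp ((hF.sub continuous_const).matrix_elem i j)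
  have he0 : e t₀ = 0 := by simp [e]
  have hev : ∀ᶠ t in nhds t₀, e t < -m := by
    have ht := he.tendsto t₀
    rw [he0] at ht
    exact ht.eventually_lt_const (by linarith)
  filter_upwards [hev] with t ht x hx hx0
  have hr0 : ‖x‖ ≠ 0 := norm_ne_zero_iff.mpr hx0
  set y : Fin N → ℂ := ((‖x‖⁻¹ : ℝ) : ℂ) • x with hydef
  have hyW : y ∈ W := Submodule.smul_mem W _ hx
  have hy1 : ‖y‖ = 1 := by
    simp only [y, norm_smul, Complex.norm_real, norm_inv, norm_norm]
    field_simp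
  have hySp : y ∈ Sp := ⟨hyW, hy1⟩
  have hyb : ∀ i, ‖y i‖ ≤ 1 := by
    intro i
    rw [← hy1]
    exact norm_le_pi_norm y i
  have hQy : Q (F t) y < 0 := by
    have h1 : Q (F t) y - Q (F t₀) y = Q (F t - F t₀) y := Q_sub _ _ _
    have h2 : |Q (F t - F t₀) y| ≤ e t := Q_bound _ hyb
    have h3 : Q (F t₀) y ≤ m := hzmax hySp
    have h4 := abs_le.mp h2
    linarith [h4.2]
  have hxy : x = ((‖x‖ : ℝ) : ℂ) • y := by
    rw [hydef, smul_smul, ← Complex.ofReal_mul, mul_inv_cancel₀ hr0]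
    simp
  rw [hxy, Q_smul]
  have hpow : (0:ℝ) < ‖x‖ ^ 2 := by positivity
  exact mul_neg_of_pos_of_neg hpow hQy

lemma eventually_posOn {F : ℝ → Matrix (Fin N) (Fin N) ℂ} (hF : Continuous F) (t₀ : ℝ)
    {W : Submodule ℂ (Fin N → ℂ)} (hW : posOn (F t₀) W) :
    ∀ᶠ t in nhds t₀, posOn (F t) W := by
  have h := eventually_negOn (F := fun t => -(F t)) (hF.neg) t₀ (W := W) (negOn_neg.mpr hW)
  filter_upwards [h] with t ht
  exact negOn_neg.mp ht

lemma dims_const_path {F : ℝ → Matrix (Fin N) (Fin N) ℂ} (hF : Continuous F)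
    (hHerm : ∀ t ∈ Set.Icc (0:ℝ) 1, (F t).IsHermitian)
    (hdet : ∀ t ∈ Set.Icc (0:ℝ) 1, IsUnit (F t).det) :
    negDim (F 1) = negDim (F 0) ∧ posDim (F 1) = posDim (F 0) := by
  have key : ∀ s : Set.Icc (0:ℝ) 1, ∀ᶠ t in nhds (s : ℝ), t ∈ Set.Icc (0:ℝ) 1 →
      negDim (F t) = negDim (F (s : ℝ)) ∧ posDim (F t) = posDim (F (s : ℝ)) := by
    intro s
    have hs := s.2
    have hHs := hHerm s hs
    have hsum_s := posDim_add_negDim hHs (hdet s hs)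
    obtain ⟨W, hWr, hWneg⟩ :=
      Nat.sSup_mem ⟨0, negDim_set_nonempty (F s)⟩ (bddAbove_negDim (F s))
    obtain ⟨V, hVr, hVpos⟩ :=
      Nat.sSup_mem ⟨0, posDim_set_nonempty (F s)⟩ (bddAbove_posDim (F s))
    filter_upwards [eventually_negOn hF s hWneg, eventually_posOn hF s hVpos] with t h1 h2 ht
    have hHt := hHerm t ht
    have hsum_t := posDim_add_negDim hHt (hdet t ht)
    have hn : negDim (F (s:ℝ)) ≤ negDim (F t) := by
      rw [show negDim (F (s:ℝ)) = Module.finrank ℂ W from hWr.symm]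
      exact le_negDim h1
    have hp : posDim (F (s:ℝ)) ≤ posDim (F t) := by
      rw [show posDim (F (s:ℝ)) = Module.finrank ℂ V from hVr.symm]
      exact le_posDim h2
    constructor <;> omega
  have hpre : PreconnectedSpace (Set.Icc (0:ℝ) 1) := Subtype.preconnectedSpace isPreconnected_Icc
  set g : Set.Icc (0:ℝ) 1 → ℕ × ℕ := fun t => (negDim (F t), posDim (F t)) with hgdef
  have hlc : IsLocallyConstant g := by
    rw [IsLocallyConstant.iff_eventually_eq]
    intro s
    rw [nhds_subtype]
    rw [Filter.eventually_comap]
    filter_upwards [key s] with t ht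
    rintro ⟨t', ht'⟩ rfl
    have := ht ht'
    simp only [g, Prod.mk.injEq]
    exact ⟨this.1, this.2⟩
  have h01 := hlc.apply_eq_of_preconnectedSpace
    (⟨1, by norm_num⟩ : Set.Icc (0:ℝ) 1) (⟨0, by norm_num⟩ : Set.Icc (0:ℝ) 1)
  simp only [g, Prod.mk.injEq] at h01
  exact h01

lemma unit_off_spectrum {A : Matrix (Fin N) (Fin N) ℂ} {a b : ℝ}
    (hspec : spectrum ℂ A ⊆ (fun t : ℝ => (t : ℂ)) '' Set.Ioo a b) (μ : ℝ)
    (hμ : μ ∉ Set.Ioo a b) : IsUnit (A - (μ:ℂ) • 1).det := by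
  have hnot : (μ:ℂ) ∉ spectrum ℂ A := by
    intro h
    obtain ⟨t, ht, hte⟩ := hspec h
    rw [Complex.ofReal_inj] at hte
    exact hμ (hte ▸ ht)
  rw [spectrum.notMem_iff] at hnot
  have heq : algebraMap ℂ (Matrix (Fin N) (Fin N) ℂ) (μ:ℂ) - A = -(A - (μ:ℂ) • 1) := by
    rw [Algebra.algebraMap_eq_smul_one, neg_sub]
  rw [heq, IsUnit.neg_iff] at hnot
  exact (Matrix.isUnit_iff_isUnit_det _).mp hnot

end Stmt6Aux

open Stmt6Aux

theorem stmt6 {N : ℕ} (J A : Matrix (Fin N) (Fin N) ℂ)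
    (hJinv : IsUnit J.det) (hJ : J.IsHermitian) (κ : ℕ)
    (hκ : (Finset.univ.filter fun i => hJ.eigenvalues i < 0).card = κ)
    (hA : J * A = Aᴴ * J) (a b : ℝ) (hab : a < b)
    (hspec : spectrum ℂ A ⊆ (fun t : ℝ => (t : ℂ)) '' Set.Ioo a b) :
    ∃ hH : ((A - (b : ℂ) • 1)ᴴ * J * (A - (a : ℂ) • 1)).IsHermitian,
      (Finset.univ.filter fun i => 0 < hH.eigenvalues i).card = κ ∧
      (Finset.univ.filter fun i => hH.eigenvalues i < 0).card = N - κ := by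
  classical
  set c : ℝ := (a + b) / 2 with hc
  have hac : a < c := by rw [hc]; linarith
  have hcb : c < b := by rw [hc]; linarith
  set At : ℝ → Matrix (Fin N) (Fin N) ℂ :=
    fun t => (t : ℂ) • A + ((1 - t : ℝ) : ℂ) • ((c : ℂ) • (1 : Matrix (Fin N) (Fin N) ℂ))
    with hAtdef
  set F : ℝ → Matrix (Fin N) (Fin N) ℂ :=
    fun t => (At t - (b : ℂ) • 1)ᴴ * J * (At t - (a : ℂ) • 1) with hFdef
  have hAtcont : Continuous At := by
    apply Continuous.add
    · exact Complex.continuous_ofReal.smul continuous_const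
    · exact (Complex.continuous_ofReal.comp
        (continuous_const.sub continuous_id)).smul continuous_const
  have hFcont : Continuous F := by
    exact (((hAtcont.sub continuous_const).matrix_conjTranspose).matrix_mul
      continuous_const).matrix_mul (hAtcont.sub continuous_const)
  have hsa : ∀ (t : ℝ) (μ : ℝ), J * (At t - (μ:ℂ) • 1) = (At t - (μ:ℂ) • 1)ᴴ * J := by
    intro t μ
    simp only [hAtdef, Matrix.conjTranspose_sub, Matrix.conjTranspose_add,
      Matrix.conjTranspose_smul, Matrix.conjTranspose_one, mul_sub, sub_mul, mul_add, add_mul,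
      Matrix.mul_smul, Matrix.smul_mul, Matrix.mul_one, Matrix.one_mul, hA, Complex.star_def,
      Complex.conj_ofReal]
  have hBC : ∀ t : ℝ, (At t - (a:ℂ) • 1) * (At t - (b:ℂ) • 1)
      = (At t - (b:ℂ) • 1) * (At t - (a:ℂ) • 1) := by
    intro t
    simp only [mul_sub, sub_mul, Matrix.smul_mul, Matrix.mul_smul, Matrix.mul_one,
      Matrix.one_mul, smul_smul]
    rw [mul_comm (b:ℂ) (a:ℂ)]
    abel
  have hHermF : ∀ t : ℝ, (F t).IsHermitian := by
    intro t
    have hJB : J * (At t - (b:ℂ) • 1) = (At t - (b:ℂ) • 1)ᴴ * J := hsa t b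
    have hJC : J * (At t - (a:ℂ) • 1) = (At t - (a:ℂ) • 1)ᴴ * J := hsa t a
    have e1 : F t = ((At t - (a:ℂ) • 1) * (At t - (b:ℂ) • 1))ᴴ * J := by
      show (At t - (b:ℂ) • 1)ᴴ * J * (At t - (a:ℂ) • 1) = _
      rw [Matrix.conjTranspose_mul, Matrix.mul_assoc, Matrix.mul_assoc, hJC]
    show (F t)ᴴ = F t
    rw [e1, Matrix.conjTranspose_mul, Matrix.conjTranspose_conjTranspose, hJ.eq,
      ← Matrix.mul_assoc, hJC, Matrix.mul_assoc, hJB, ← Matrix.mul_assoc,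
      ← Matrix.conjTranspose_mul, ← hBC t]
  have hdetAt : ∀ t ∈ Set.Icc (0:ℝ) 1, ∀ μ : ℝ, μ = a ∨ μ = b →
      IsUnit (At t - (μ:ℂ) • 1).det := by
    rintro t ⟨ht0, ht1⟩ μ hμ
    have hμc : μ ≠ c := by rcases hμ with rfl | rfl; exacts [hac.ne, hcb.ne']
    rcases eq_or_lt_of_le ht0 with h0 | h0
    · have hform : At t - (μ:ℂ) • 1 = ((c - μ : ℝ) : ℂ) • (1 : Matrix (Fin N) (Fin N) ℂ) := by
        rw [hAtdef, ← h0]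
        push_cast
        module
      rw [hform, Matrix.det_smul, Matrix.det_one, mul_one]
      apply isUnit_iff_ne_zero.mpr
      apply pow_ne_zero
      exact Complex.ofReal_ne_zero.mpr (sub_ne_zero.mpr (Ne.symm hμc))
    · set μ' : ℝ := (μ - (1 - t) * c) / t with hμ'def
      have hform : At t - (μ:ℂ) • 1 = (t:ℂ) • (A - (μ':ℂ) • 1) := by
        have ht' : (t:ℂ) * (μ':ℂ) = (μ:ℂ) - ((1 - t:ℝ):ℂ) * (c:ℂ) := by
          rw [hμ'def]
          push_cast
          rw [mul_comm]
          exact div_mul_cancel₀ _ (by exact_mod_cast h0.ne')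
        rw [hAtdef, smul_sub, smul_smul, ht']
        push_cast
        module
      rw [hform, Matrix.det_smul]
      apply IsUnit.mul
      · exact isUnit_iff_ne_zero.mpr (pow_ne_zero _ (Complex.ofReal_ne_zero.mpr h0.ne'))
      · apply unit_off_spectrum hspec
        rcases hμ with rfl | rfl
        · intro hin
          have h1 : μ' ≤ μ := by
            rw [hμ'def, div_le_iff₀ h0]
            nlinarith
          exact absurd hin.1 (not_lt.mpr h1)
        · intro hin
          have h1 : μ ≤ μ' := by
            rw [hμ'def, le_div_iff₀ h0]
            nlinarith
          exact absurd hin.2 (not_lt.mpr h1)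
  have hdetF : ∀ t ∈ Set.Icc (0:ℝ) 1, IsUnit (F t).det := by
    intro t ht
    rw [hFdef]
    simp only [Matrix.det_mul, Matrix.det_conjTranspose]
    exact ((hdetAt t ht b (Or.inr rfl)).star.mul hJinv).mul (hdetAt t ht a (Or.inl rfl))
  have hF1 : F 1 = (A - (b:ℂ) • 1)ᴴ * J * (A - (a:ℂ) • 1) := by
    have h1 : At 1 = A := by
      rw [hAtdef]
      push_cast
      module
    show (At 1 - (b:ℂ) • 1)ᴴ * J * (At 1 - (a:ℂ) • 1) = _
    rw [h1]
  set r : ℝ := (c - b) * (c - a) with hrdef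
  have hrneg : r < 0 := mul_neg_of_neg_of_pos (by linarith) (by linarith)
  have hF0 : F 0 = (r:ℂ) • J := by
    have h1 : At 0 - (b:ℂ) • 1 = ((c - b : ℝ):ℂ) • (1 : Matrix (Fin N) (Fin N) ℂ) := by
      rw [hAtdef]; push_cast; module
    have h2 : At 0 - (a:ℂ) • 1 = ((c - a : ℝ):ℂ) • (1 : Matrix (Fin N) (Fin N) ℂ) := by
      rw [hAtdef]; push_cast; module
    show (At 0 - (b:ℂ) • 1)ᴴ * J * (At 0 - (a:ℂ) • 1) = _
    rw [h1, h2, Matrix.conjTranspose_smul, Matrix.conjTranspose_one,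
      Matrix.smul_mul, Matrix.one_mul, Matrix.mul_smul, Matrix.mul_one,
      smul_smul, Complex.star_def, Complex.conj_ofReal, hrdef]
    congr 1
    push_cast
    ring
  obtain ⟨hnegc, hposc⟩ := dims_const_path hFcont (fun t _ => hHermF t) hdetF
  have hκN : κ ≤ N := by
    rw [← hκ]
    exact (Finset.card_filter_le _ _).trans (by simp)
  have hnegJ : negDim J = κ := by rw [negDim_eq hJ, hκ]
  have hposJ : posDim J = N - κ := by
    have h := posDim_add_negDim hJ hJinv
    omega
  obtain ⟨W, hWr, hWneg⟩ := Nat.sSup_mem ⟨0, negDim_set_nonempty J⟩ (bddAbove_negDim J)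
  obtain ⟨V, hVr, hVpos⟩ := Nat.sSup_mem ⟨0, posDim_set_nonempty J⟩ (bddAbove_posDim J)
  have hWκ : Module.finrank ℂ W = κ := by rw [hWr]; exact hnegJ
  have hVκ : Module.finrank ℂ V = N - κ := by rw [hVr]; exact hposJ
  have hpos_ge : κ ≤ posDim (F 0) := by
    have hposOn : posOn (F 0) W := by
      intro x hx hx0
      rw [hF0, Q_real_smul]
      exact mul_pos_of_neg_of_neg hrneg (hWneg x hx hx0)
    rw [← hWκ]
    exact le_posDim hposOn
  have hneg_ge : N - κ ≤ negDim (F 0) := by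
    have hnegOn : negOn (F 0) V := by
      intro x hx hx0
      rw [hF0, Q_real_smul]
      exact mul_neg_of_neg_of_pos hrneg (hVpos x hx hx0)
    rw [← hVκ]
    exact le_negDim hnegOn
  have hsum0 := posDim_add_negDim (hHermF 0) (hdetF 0 (by norm_num))
  have hposF0 : posDim (F 0) = κ := by omega
  have hnegF0 : negDim (F 0) = N - κ := by omega
  have hHHerm : ((A - (b:ℂ) • 1)ᴴ * J * (A - (a:ℂ) • 1)).IsHermitian := hF1 ▸ hHermF 1
  refine ⟨hHHerm, ?_, ?_⟩
  · rw [← posDim_eq hHHerm, ← hF1, hposc, hposF0]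
  · rw [← negDim_eq hHHerm, ← hF1, hnegc, hnegF0]
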